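/- Let G be a minimum counterexample to the statement 'every odd-hole-free graph H with Δ(H) ≥ 7 satisfies χ(H) ≤ max{Δ(H) − 1, ω(H)}', and let u be a vertex of G with degree Δ(G). Then there exist two nonadjacent vertices x, y ∈ N(u) such that every proper coloring of G − u with Δ(G) − 1 colors assigns the same color to x and y and assigns pairwise distinct colors to the vertices of N(u) \ {y}; that is, the unique monochromatic pair of neighbors of u is the same pair {x, y} in every proper (Δ(G) − 1)-coloring of G − u. -/

import Mathlib

open Finset SimpleGraph

/-- `G` has an *odd hole*: an induced cycle of odd length at least 5
(a hole is an induced cycle of length at least 4, so odd holes have length at least 5). -/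
def SimpleGraph.HasOddHole {V : Type*} (G : SimpleGraph V) : Prop :=
  ∃ n : ℕ, Odd n ∧ 5 ≤ n ∧ Nonempty (SimpleGraph.cycleGraph n ↪g G)


private lemma modlem (n a b : ℕ) (hn : 2 ≤ n) (ha : a < n) (hb : b < n) :
    ((n - b + a) % n = 1) ↔ (a = b + 1 ∨ (b = n - 1 ∧ a = 0)) := by
  rcases le_or_gt b a with h | h
  · have h1 : n - b + a = n + (a - b) := by omega
    rw [h1, Nat.add_mod_left, Nat.mod_eq_of_lt (show a - b < n by omega)]
    constructor <;> (intro h2; omega)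
  · rw [Nat.mod_eq_of_lt (show n - b + a < n by omega)]
    constructor <;> (intro h2; omega)

private lemma walk_take {W : Type} {G' : SimpleGraph W} {a b : W} (p : G'.Walk a b) :
    ∀ (k : ℕ), k ≤ p.length → ∃ q : G'.Walk a (p.getVert k), q.length = k := by
  induction p with
  | nil => intro k hk; simp only [SimpleGraph.Walk.length_nil, Nat.le_zero] at hk; subst hk
           exact ⟨SimpleGraph.Walk.nil, rfl⟩
  | cons h q ih =>
    intro k hk
    cases k with
    | zero => exact ⟨SimpleGraph.Walk.nil, rfl⟩
    | succ k =>
      obtain ⟨r, hr⟩ := ih k (by simpa [SimpleGraph.Walk.length_cons] using hk)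
      exact ⟨SimpleGraph.Walk.cons h r, by simp [hr]⟩

private lemma walk_drop {W : Type} {G' : SimpleGraph W} {a b : W} (p : G'.Walk a b) :
    ∀ (k : ℕ), ∃ q : G'.Walk (p.getVert k) b, q.length = p.length - k := by
  induction p with
  | nil => intro k; exact ⟨SimpleGraph.Walk.nil, by simp⟩
  | cons h q ih =>
    intro k
    cases k with
    | zero => exact ⟨(SimpleGraph.Walk.cons h q).copy (SimpleGraph.Walk.getVert_zero _).symm rfl,
        by simp⟩
    | succ k =>
      obtain ⟨r, hr⟩ := ih k
      exact ⟨r.copy (SimpleGraph.Walk.getVert_cons_succ q h).symm rfl, by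
        rw [SimpleGraph.Walk.length_copy, hr, SimpleGraph.Walk.length_cons]; omega⟩

private lemma greedy {V : Type} [Fintype V] (G : SimpleGraph V) [DecidableRel G.Adj] (d : ℕ)
    (hd : ∀ v, G.degree v ≤ d) : G.Colorable (d + 1) := by
  classical
  suffices h : ∀ s : Finset V, ∃ f : V → Fin (d + 1),
      ∀ a ∈ s, ∀ b ∈ s, G.Adj a b → f a ≠ f b by
    obtain ⟨f, hf⟩ := h Finset.univ
    exact ⟨SimpleGraph.Coloring.mk f fun {a b} hab => hf a (mem_univ a) b (mem_univ b) hab⟩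
  intro s
  induction s using Finset.induction_on with
  | empty => exact ⟨fun _ => ⟨0, by omega⟩, by simp⟩
  | @insert a s ha ih =>
    obtain ⟨f, hf⟩ := ih
    have hN : ((G.neighborFinset a ∩ s).image f).card < d + 1 := by
      calc ((G.neighborFinset a ∩ s).image f).card ≤ (G.neighborFinset a ∩ s).card :=
            Finset.card_image_le
        _ ≤ (G.neighborFinset a).card := Finset.card_le_card Finset.inter_subset_left
        _ = G.degree a := G.card_neighborFinset_eq_degree a
        _ ≤ d := hd a
        _ < d + 1 := by omega
  -- find a free color
    have hex : ∃ k : Fin (d + 1), k ∉ (G.neighborFinset a ∩ s).image f := by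
      by_contra h'
      push_neg at h'
      have hsub : (Finset.univ : Finset (Fin (d + 1))) ⊆ (G.neighborFinset a ∩ s).image f :=
        fun k _ => h' k
      have := Finset.card_le_card hsub
      simp only [Finset.card_univ, Fintype.card_fin] at this
      omega
    obtain ⟨k, hk⟩ := hex
    refine ⟨Function.update f a k, ?_⟩
    intro b hb b' hb' hadj
    rcases Finset.mem_insert.mp hb with rfl | hb2 <;>
      rcases Finset.mem_insert.mp hb' with rfl | hb2'
    · exact absurd hadj (G.loopless.irrefl _)
    · rw [Function.update_self, Function.update_of_ne (by rintro rfl; exact ha hb2')]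
      intro hEq
      exact hk (hEq ▸ Finset.mem_image_of_mem f
        (Finset.mem_inter.mpr ⟨(SimpleGraph.mem_neighborFinset _ _ _).mpr hadj, hb2'⟩))
    · rw [Function.update_self, Function.update_of_ne (by rintro rfl; exact ha hb2)]
      intro hEq
      exact hk (hEq.symm ▸ Finset.mem_image_of_mem f
        (Finset.mem_inter.mpr ⟨(SimpleGraph.mem_neighborFinset _ _ _).mpr hadj.symm, hb2⟩))
    · rw [Function.update_of_ne (by rintro rfl; exact ha hb2),
        Function.update_of_ne (by rintro rfl; exact ha hb2')]
      exact hf b hb2 b' hb2' hadj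

private lemma extend_col {V : Type} (G : SimpleGraph V) (u : V) {m : ℕ} (c : V → Fin m)
    (hc : ∀ v w, v ≠ u → w ≠ u → G.Adj v w → c v ≠ c w) (k : Fin m)
    (hk : ∀ s, G.Adj u s → c s ≠ k) : G.Colorable m := by
  classical
  refine ⟨SimpleGraph.Coloring.mk (fun w => if w = u then k else c w) ?_⟩
  intro a b hab
  by_cases hau : a = u
  · have hbu : b ≠ u := by
      intro h
      rw [hau, h] at hab
      exact G.loopless.irrefl u hab
    simp only [if_pos hau, if_neg hbu]
    intro h
    exact hk b (hau ▸ hab) h.symm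
  · by_cases hbu : b = u
    · simp only [if_neg hau, if_pos hbu]
      intro h
      exact hk a (hbu ▸ hab.symm) h
    · simp only [if_neg hau, if_neg hbu]
      exact hc a b hau hbu hab

private lemma pair_structure {V : Type} [Fintype V] (G : SimpleGraph V) [DecidableRel G.Adj]
    (u : V) {m : ℕ} (hdeg : G.degree u = m + 1) (hnotcol : ¬ G.Colorable m)
    (c : V → Fin m) (hc : ∀ v w, v ≠ u → w ≠ u → G.Adj v w → c v ≠ c w) :
    ∃ x y, x ≠ y ∧ G.Adj u x ∧ G.Adj u y ∧ c x = c y ∧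
      ∀ v w, G.Adj u v → G.Adj u w → c v = c w →
        v = w ∨ (v = x ∧ w = y) ∨ (v = y ∧ w = x) := by
  classical
  have hScard : (G.neighborFinset u).card = m + 1 := by
    rw [G.card_neighborFinset_eq_degree, hdeg]
  have hall : ∀ k : Fin m, ∃ s ∈ G.neighborFinset u, c s = k := by
    intro k
    by_contra h
    push_neg at h
    exact hnotcol (extend_col G u c hc k
      (fun s hs => h s ((SimpleGraph.mem_neighborFinset _ _ _).mpr hs)))
  rcases Nat.eq_zero_or_pos m with hm | hm
  · obtain ⟨s, hs⟩ := Finset.card_pos.mp (by omega : 0 < (G.neighborFinset u).card)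
    exact absurd (c s).isLt (by omega)
  set F : Fin m → Finset V := fun k => (G.neighborFinset u).filter (fun s => c s = k) with hF
  have hsum : ∑ k, (F k).card = m + 1 := by
    rw [← hScard]
    exact (Finset.card_eq_sum_card_fiberwise (fun x _ => Finset.mem_univ (c x))).symm
  have hone : ∀ k, 1 ≤ (F k).card := by
    intro k
    obtain ⟨s, hs, hcs⟩ := hall k
    exact Finset.card_pos.mpr ⟨s, Finset.mem_filter.mpr ⟨hs, hcs⟩⟩
  have hex2 : ∃ k₀, 2 ≤ (F k₀).card := by
    by_contra h
    push_neg at h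
    have h2 : ∑ k, (F k).card ≤ ∑ _k : Fin m, 1 :=
      Finset.sum_le_sum (fun k _ => by have := h k; omega)
    simp only [Finset.sum_const, Finset.card_univ, Fintype.card_fin, smul_eq_mul, mul_one] at h2
    omega
  obtain ⟨k₀, hk₀⟩ := hex2
  have herased : ∀ k : Fin m, (Finset.univ.erase k).card = m - 1 := by
    intro k
    rw [Finset.card_erase_of_mem (Finset.mem_univ k)]
    simp
  have hesum : ∀ k : Fin m, (F k).card + ∑ x ∈ Finset.univ.erase k, (F x).card = m + 1 := by
    intro k
    rw [← hsum]
    exact Finset.add_sum_erase _ (fun x => (F x).card) (Finset.mem_univ k)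
  have hlow : ∀ k : Fin m, (Finset.univ.erase k).card ≤ ∑ x ∈ Finset.univ.erase k, (F x).card := by
    intro k
    calc (Finset.univ.erase k).card = ∑ _x ∈ Finset.univ.erase k, 1 := by simp
      _ ≤ _ := Finset.sum_le_sum (fun x _ => hone x)
  have hcard2 : (F k₀).card = 2 := by
    have h1 := hesum k₀
    have h2 := hlow k₀
    have h3 := herased k₀
    omega
  have hsingle : ∀ k, k ≠ k₀ → (F k).card = 1 := by
    intro k hk
    have h1 := hesum k₀
    have h4 : (F k).card + ∑ x ∈ (Finset.univ.erase k₀).erase k, (F x).card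
        = ∑ x ∈ Finset.univ.erase k₀, (F x).card :=
      Finset.add_sum_erase _ (fun x => (F x).card) (Finset.mem_erase.mpr ⟨hk, Finset.mem_univ k⟩)
    have h5 : ((Finset.univ.erase k₀).erase k).card
        ≤ ∑ x ∈ (Finset.univ.erase k₀).erase k, (F x).card := by
      calc ((Finset.univ.erase k₀).erase k).card
          = ∑ _x ∈ (Finset.univ.erase k₀).erase k, 1 := by simp
        _ ≤ _ := Finset.sum_le_sum (fun x _ => hone x)
    have h6 : ((Finset.univ.erase k₀).erase k).card = m - 2 := by
      rw [Finset.card_erase_of_mem (Finset.mem_erase.mpr ⟨hk, Finset.mem_univ k⟩), herased k₀]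
      omega
    have h7 := hone k
    have h8 := herased k₀
    omega
  obtain ⟨x, y, hxy, hFxy⟩ := Finset.card_eq_two.mp hcard2
  have hxmem : x ∈ F k₀ := by rw [hFxy]; simp
  have hymem : y ∈ F k₀ := by rw [hFxy]; simp
  obtain ⟨hxS, hxc⟩ := Finset.mem_filter.mp hxmem
  obtain ⟨hyS, hyc⟩ := Finset.mem_filter.mp hymem
  refine ⟨x, y, hxy, (SimpleGraph.mem_neighborFinset _ _ _).mp hxS,
    (SimpleGraph.mem_neighborFinset _ _ _).mp hyS, hxc.trans hyc.symm, ?_⟩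
  intro v w hv hw hcvw
  by_cases hvw : v = w
  · exact Or.inl hvw
  · have hsub : ({v, w} : Finset V) ⊆ F (c v) := by
      intro t ht
      rcases Finset.mem_insert.mp ht with rfl | ht
      · exact Finset.mem_filter.mpr ⟨(SimpleGraph.mem_neighborFinset _ _ _).mpr hv, rfl⟩
      · rw [Finset.mem_singleton.mp ht]
        exact Finset.mem_filter.mpr ⟨(SimpleGraph.mem_neighborFinset _ _ _).mpr hw, hcvw.symm⟩
    have h2 : 2 ≤ (F (c v)).card := by
      calc 2 = ({v, w} : Finset V).card := (Finset.card_pair hvw).symm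
        _ ≤ _ := Finset.card_le_card hsub
    have hcvk : c v = k₀ := by
      by_contra h
      have := hsingle _ h
      omega
    have hvmem : v ∈ ({x, y} : Finset V) := by
      rw [← hFxy, ← hcvk]
      exact hsub (Finset.mem_insert_self v {w})
    have hwmem : w ∈ ({x, y} : Finset V) := by
      rw [← hFxy, ← hcvk]
      exact hsub (by simp)
    simp only [Finset.mem_insert, Finset.mem_singleton] at hvmem hwmem
    rcases hvmem with rfl | rfl <;> rcases hwmem with h | h
    · exact absurd h.symm hvw
    · exact Or.inr (Or.inl ⟨rfl, h⟩)
    · exact Or.inr (Or.inr ⟨rfl, h⟩)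
    · exact absurd h.symm hvw

set_option maxHeartbeats 2000000 in
private lemma kempe {V : Type} [Fintype V] (G : SimpleGraph V) [DecidableRel G.Adj]
    (hfree : ¬ G.HasOddHole) (u : V) {m : ℕ} (hnotcol : ¬ G.Colorable m)
    (c : V → Fin m) (hc : ∀ v w, v ≠ u → w ≠ u → G.Adj v w → c v ≠ c w)
    {x y : V} (hxu : G.Adj u x) (hyu : G.Adj u y) (hxy : x ≠ y) (hcxy : c x = c y)
    (huniq : ∀ v w, G.Adj u v → G.Adj u w → c v = c w →
      v = w ∨ (v = x ∧ w = y) ∨ (v = y ∧ w = x))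
    {v : V} (hvu : G.Adj u v) (hvx : v ≠ x) (hvy : v ≠ y) {β : Fin m} (hβ : β ≠ c v) :
    ∃ s, G.Adj u s ∧ c s = β ∧ G.Adj v s := by
  classical
  by_contra hno
  push_neg at hno
  have hvu' : v ≠ u := (G.ne_of_adj hvu).symm
  have hβα : β ≠ c v := hβ
  have hAv : ∀ s, G.Adj u s → c s = c v → s = v := by
    intro s hs hcs
    rcases huniq s v hs hvu hcs with h | ⟨h1, h2⟩ | ⟨h1, h2⟩
    · exact h
    · exact absurd h2 hvy
    · exact absurd h2 hvx
  set α := c v with hα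
  let Gc : SimpleGraph V :=
    { Adj := fun a b => G.Adj a b ∧ a ≠ u ∧ b ≠ u ∧ (c a = α ∨ c a = β) ∧ (c b = α ∨ c b = β)
      symm := ⟨fun a b ⟨h1, h2, h3, h4, h5⟩ => ⟨h1.symm, h3, h2, h5, h4⟩⟩
      loopless := ⟨fun a h => G.loopless.irrefl a h.1⟩ }
  have hreach : ∀ w, Gc.Reachable v w → w ≠ u ∧ (c w = α ∨ c w = β) := by
    have key : ∀ {a b : V} (_p : Gc.Walk a b), b = a ∨ (b ≠ u ∧ (c b = α ∨ c b = β)) := by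
      intro a b p
      induction p with
      | nil => exact Or.inl rfl
      | cons h q ih =>
        rcases ih with rfl | hb
        · exact Or.inr ⟨h.2.2.1, h.2.2.2.2⟩
        · exact Or.inr hb
    intro w hw
    obtain ⟨p⟩ := hw
    rcases key p with rfl | h
    · exact ⟨hvu', Or.inl rfl⟩
    · exact h
  by_cases hcase : ∃ b, G.Adj u b ∧ c b = β ∧ Gc.Reachable v b
  · -- Kempe component of v contains a β-colored neighbor of u
    obtain ⟨b₁, hb₁⟩ := hcase
    set B' := (G.neighborFinset u).filter (fun s => c s = β ∧ Gc.Reachable v s) with hB'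
    have hB'ne : B'.Nonempty :=
      ⟨b₁, Finset.mem_filter.mpr ⟨(SimpleGraph.mem_neighborFinset _ _ _).mpr hb₁.1,
        hb₁.2.1, hb₁.2.2⟩⟩
    obtain ⟨b, hbB', hbmin⟩ := Finset.exists_min_image B' (fun s => Gc.dist v s) hB'ne
    obtain ⟨hbS, hbβ, hbr⟩ := Finset.mem_filter.mp hbB'
    have hbu : G.Adj u b := (SimpleGraph.mem_neighborFinset _ _ _).mp hbS
    have hvb : v ≠ b := fun h => hβ (h ▸ hbβ).symm
    set ℓ := Gc.dist v b with hℓ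
    have hℓpos : 0 < ℓ := hbr.pos_dist_of_ne hvb
    obtain ⟨P, hP⟩ := hbr.exists_walk_length_eq_dist
    set p : ℕ → V := fun k => P.getVert k with hpdef
    have hp0 : p 0 = v := P.getVert_zero
    have hpℓ : p ℓ = b := by
      rw [show ℓ = P.length from hP.symm]
      exact P.getVert_length
    have htake : ∀ k, k ≤ ℓ → ∃ q : Gc.Walk v (p k), q.length = k := by
      intro k hk
      exact walk_take P k (by omega)
    have hdrop : ∀ k, k ≤ ℓ → ∃ q : Gc.Walk (p k) b, q.length = ℓ - k := by
      intro k _hk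
      obtain ⟨q, hq⟩ := walk_drop P k
      exact ⟨q, by rw [hq, hP]⟩
    have hreachk : ∀ k, k ≤ ℓ → Gc.Reachable v (p k) := fun k hk => ⟨(htake k hk).choose⟩
    have hdistk : ∀ k, k ≤ ℓ → Gc.dist v (p k) ≤ k := by
      intro k hk
      obtain ⟨q, hq⟩ := htake k hk
      have h2 := SimpleGraph.dist_le q
      rw [hq] at h2
      exact h2
    have hadjk : ∀ k, k < ℓ → Gc.Adj (p k) (p (k + 1)) := by
      intro k hk
      exact P.adj_getVert_succ (by omega)
    have hpu : ∀ k, k ≤ ℓ → p k ≠ u := fun k hk => (hreach _ (hreachk k hk)).1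
    have hcolk : ∀ k, k ≤ ℓ → (c (p k) = α ∨ c (p k) = β) :=
      fun k hk => (hreach _ (hreachk k hk)).2
    have halt : ∀ k, k ≤ ℓ → c (p k) = if Even k then α else β := by
      intro k
      induction k with
      | zero => intro _; rw [if_pos (by simp), hp0]
      | succ k ih =>
        intro hk
        have hk' : k ≤ ℓ := by omega
        have hne : c (p k) ≠ c (p (k + 1)) :=
          hc _ _ (hpu k hk') (hpu (k + 1) hk) (hadjk k (by omega)).1
        by_cases he : Even k
        · have h1 : c (p k) = α := by simpa [he] using ih hk'
          have h2 : c (p (k + 1)) = β := by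
            rcases hcolk (k + 1) hk with h | h
            · exact absurd (h1.trans h.symm) hne
            · exact h
          rw [h2, if_neg (by simp [Nat.even_add_one, he])]
        · have h1 : c (p k) = β := by simpa [he] using ih hk'
          have h2 : c (p (k + 1)) = α := by
            rcases hcolk (k + 1) hk with h | h
            · exact h
            · exact absurd (h1.trans h.symm) hne
          rw [h2, if_pos (Nat.even_add_one.mpr he)]
    have hlodd : ℓ % 2 = 1 := by
      rcases Nat.even_or_odd ℓ with he | ho
      · exfalso
        have h1 := halt ℓ le_rfl
        rw [if_pos he, hpℓ] at h1
        exact hβα (hbβ.symm.trans h1)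
      · exact Nat.odd_iff.mp ho
    have hℓ1 : ℓ ≠ 1 := by
      intro h
      apply hno b hbu hbβ
      have h2 := (hadjk 0 (by omega)).1
      rw [hp0] at h2
      have h3 : p 1 = b := by rw [← h]; exact hpℓ
      rw [h3] at h2
      exact h2
    have hℓ3 : 3 ≤ ℓ := by omega
    have hinj : ∀ i j, i ≤ ℓ → j ≤ ℓ → p i = p j → i = j := by
      have key : ∀ i j, i < j → j ≤ ℓ → p i = p j → False := by
        intro i j hij hj heq
        obtain ⟨q1, hq1⟩ := htake i (by omega)
        obtain ⟨q2, hq2⟩ := hdrop j hj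
        have hdle := SimpleGraph.dist_le (q1.append (q2.copy heq.symm rfl))
        rw [SimpleGraph.Walk.length_append, SimpleGraph.Walk.length_copy, hq1, hq2] at hdle
        omega
      intro i j hi hj heq
      rcases lt_trichotomy i j with h | h | h
      · exact absurd heq (fun he => key i j h hj he)
      · exact h
      · exact absurd heq.symm (fun he => key j i h hi he)
    have hchord : ∀ i j, i + 2 ≤ j → j ≤ ℓ → ¬ G.Adj (p i) (p j) := by
      intro i j h2 hj hadj
      have hi : i ≤ ℓ := by omega
      have hci := halt i hi
      have hcj := halt j hj
      by_cases he : Even i <;> by_cases he' : Even j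
      · exact hc _ _ (hpu i hi) (hpu j hj) hadj
          (by rw [hci, hcj, if_pos he, if_pos he'])
      · -- Gc-edge: shortcut
        rw [if_pos he] at hci
        rw [if_neg he'] at hcj
        have hGc : Gc.Adj (p i) (p j) :=
          ⟨hadj, hpu i hi, hpu j hj, Or.inl hci, Or.inr hcj⟩
        obtain ⟨q1, hq1⟩ := htake i hi
        obtain ⟨q2, hq2⟩ := hdrop j hj
        have hdle := SimpleGraph.dist_le (q1.append (SimpleGraph.Walk.cons hGc q2))
        rw [SimpleGraph.Walk.length_append, SimpleGraph.Walk.length_cons, hq1, hq2] at hdle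
        omega
      · rw [if_neg he] at hci
        rw [if_pos he'] at hcj
        have hGc : Gc.Adj (p i) (p j) :=
          ⟨hadj, hpu i hi, hpu j hj, Or.inr hci, Or.inl hcj⟩
        obtain ⟨q1, hq1⟩ := htake i hi
        obtain ⟨q2, hq2⟩ := hdrop j hj
        have hdle := SimpleGraph.dist_le (q1.append (SimpleGraph.Walk.cons hGc q2))
        rw [SimpleGraph.Walk.length_append, SimpleGraph.Walk.length_cons, hq1, hq2] at hdle
        omega
      · exact hc _ _ (hpu i hi) (hpu j hj) hadj
          (by rw [hci, hcj, if_neg he, if_neg he'])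
    have hUadj : ∀ k, k ≤ ℓ → G.Adj u (p k) → k = 0 ∨ k = ℓ := by
      intro k hk hadj
      by_contra hcon
      push_neg at hcon
      rcases hcolk k hk with h | h
      · have h1 : p k = v := hAv _ hadj h
        have h2 : k = 0 := hinj k 0 hk (by omega) (by rw [h1, hp0])
        exact hcon.1 h2
      · have hmem : p k ∈ B' :=
          Finset.mem_filter.mpr ⟨(SimpleGraph.mem_neighborFinset _ _ _).mpr hadj, h,
            hreachk k hk⟩
        have h1 := hbmin _ hmem
        have h2 := hdistk k hk
        have h3 := hcon.2
        omega
    -- construct the odd hole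
    let f : Fin (ℓ + 2) → V := fun i => if i.val = 0 then u else p (i.val - 1)
    have hfval0 : ∀ i : Fin (ℓ + 2), i.val = 0 → f i = u := fun i h => by
      show (if i.val = 0 then u else p (i.val - 1)) = _; rw [if_pos h]
    have hfvalk : ∀ i : Fin (ℓ + 2), i.val ≠ 0 → f i = p (i.val - 1) := fun i h => by
      show (if i.val = 0 then u else p (i.val - 1)) = _; rw [if_neg h]
    have hfu : ∀ i : Fin (ℓ + 2), i.val ≠ 0 → f i ≠ u := by
      intro i h
      rw [hfvalk i h]
      exact hpu _ (by have := i.isLt; omega)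
    have hfinj : Function.Injective f := by
      intro i j hij
      by_cases hi : i.val = 0 <;> by_cases hj : j.val = 0
      · exact Fin.ext (by omega)
      · exact absurd ((hfval0 i hi) ▸ hij).symm (hfu j hj)
      · exact absurd ((hfval0 j hj) ▸ hij) (hfu i hi)
      · rw [hfvalk i hi, hfvalk j hj] at hij
        have h1 := hinj _ _ (by have := i.isLt; omega) (by have := j.isLt; omega) hij
        exact Fin.ext (by omega)
    have hsub : ∀ i j : Fin (ℓ + 2), (i - j = 1) ↔
        (i.val = j.val + 1 ∨ (j.val = ℓ + 1 ∧ i.val = 0)) := by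
      intro i j
      rw [Fin.ext_iff, Fin.sub_def]
      have hv1 : (1 : Fin (ℓ + 2)).val = 1 := rfl
      rw [hv1]
      simp only []
      have := modlem (ℓ + 2) i.val j.val (by omega) i.isLt j.isLt
      rw [this]
      constructor <;> (intro h; omega)
    have hmadj : ∀ i j : Fin (ℓ + 2), G.Adj (f i) (f j) ↔ (cycleGraph (ℓ + 2)).Adj i j := by
      intro i j
      rw [SimpleGraph.cycleGraph_adj, hsub i j, hsub j i]
      constructor
      · intro hadj
        by_cases hi : i.val = 0 <;> by_cases hj : j.val = 0
        · rw [hfval0 i hi, hfval0 j hj] at hadj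
          exact absurd hadj (G.loopless.irrefl u)
        · rw [hfval0 i hi, hfvalk j hj] at hadj
          rcases hUadj _ (by have := j.isLt; omega) hadj with h | h
          · exact Or.inr (Or.inl (by omega))
          · exact Or.inl (Or.inr (by omega))
        · rw [hfval0 j hj, hfvalk i hi] at hadj
          rcases hUadj _ (by have := i.isLt; omega) hadj.symm with h | h
          · exact Or.inl (Or.inl (by omega))
          · exact Or.inr (Or.inr (by omega))
        · rw [hfvalk i hi, hfvalk j hj] at hadj
          have hne : i.val - 1 ≠ j.val - 1 := by
            intro h
            exact G.loopless.irrefl _ (h ▸ hadj)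
          have h1 : ¬ (i.val - 1 + 2 ≤ j.val - 1) := by
            intro h
            exact hchord _ _ h (by have := j.isLt; omega) hadj
          have h2 : ¬ (j.val - 1 + 2 ≤ i.val - 1) := by
            intro h
            exact hchord _ _ h (by have := i.isLt; omega) hadj.symm
          rcases (by omega : i.val - 1 + 1 = j.val - 1 ∨ j.val - 1 + 1 = i.val - 1) with h | h
          · exact Or.inr (Or.inl (by omega))
          · exact Or.inl (Or.inl (by omega))
      · intro hcyc
        have hstep : ∀ i j : Fin (ℓ + 2), i.val = j.val + 1 → G.Adj (f i) (f j) := by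
          intro i j hij
          by_cases hj : j.val = 0
          · rw [hfval0 j hj, hfvalk i (by omega)]
            have h1 : i.val - 1 = 0 := by omega
            rw [h1, hp0]
            exact hvu.symm
          · rw [hfvalk j hj, hfvalk i (by omega)]
            have hlt : j.val - 1 < ℓ := by have := i.isLt; omega
            have h1 := (hadjk (j.val - 1) hlt).1
            have heq : j.val - 1 + 1 = i.val - 1 := by omega
            rw [heq] at h1
            exact h1.symm
        have hwrap : ∀ i j : Fin (ℓ + 2), j.val = ℓ + 1 → i.val = 0 → G.Adj (f i) (f j) := by
          intro i j hj hi
          rw [hfval0 i hi, hfvalk j (by omega)]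
          have h1 : j.val - 1 = ℓ := by omega
          rw [h1, hpℓ]
          exact hbu
        rcases hcyc with (h | h) | (h | h)
        · exact hstep i j h
        · exact hwrap i j (by omega) (by omega)
        · exact (hstep j i h).symm
        · exact (hwrap j i (by omega) (by omega)).symm
    exact hfree ⟨ℓ + 2, Nat.odd_iff.mpr (by omega), by omega,
      ⟨⟨⟨f, hfinj⟩, fun {i j} => hmadj i j⟩⟩⟩
  · -- swap the component of v
    push_neg at hcase
    set c₁ : V → Fin m := fun w =>
      if Gc.Reachable v w then (if c w = α then β else if c w = β then α else c w) else c w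
      with hc₁def
    have hαβ : α ≠ β := fun h => hβα (h ▸ rfl)
    have hval : ∀ w, Gc.Reachable v w →
        ((c w = α ∧ c₁ w = β) ∨ (c w = β ∧ c₁ w = α)) := by
      intro w hw
      rcases (hreach w hw).2 with h | h
      · exact Or.inl ⟨h, by simp [hc₁def, hw, h]⟩
      · have h2 : c w ≠ α := by rw [h]; exact fun hh => hαβ hh.symm
        exact Or.inr ⟨h, by simp [hc₁def, hw, h2, h]⟩
    have hvout : ∀ w, ¬ Gc.Reachable v w → c₁ w = c w := fun w hw => by simp [hc₁def, hw]
    have hc₁ : ∀ a b, a ≠ u → b ≠ u → G.Adj a b → c₁ a ≠ c₁ b := by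
      intro a b hau hbu hab
      by_cases hra : Gc.Reachable v a <;> by_cases hrb : Gc.Reachable v b
      · rcases hval a hra with ⟨g1, g2⟩ | ⟨g1, g2⟩ <;>
          rcases hval b hrb with ⟨k1, k2⟩ | ⟨k1, k2⟩ <;> rw [g2, k2]
        · exact absurd (g1.trans k1.symm) (hc a b hau hbu hab)
        · exact fun hh => hαβ hh.symm
        · exact hαβ
        · exact absurd (g1.trans k1.symm) (hc a b hau hbu hab)
      · have hbcol : ¬ (c b = α ∨ c b = β) := by
          intro h
          exact hrb (hra.trans ⟨SimpleGraph.Walk.cons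
            ⟨hab, hau, hbu, (hreach a hra).2, h⟩ SimpleGraph.Walk.nil⟩)
        rw [hvout b hrb]
        rcases hval a hra with ⟨_, g2⟩ | ⟨_, g2⟩ <;> rw [g2] <;> tauto
      · have hacol : ¬ (c a = α ∨ c a = β) := by
          intro h
          exact hra (hrb.trans ⟨SimpleGraph.Walk.cons
            ⟨hab.symm, hbu, hau, (hreach b hrb).2, h⟩ SimpleGraph.Walk.nil⟩)
        rw [hvout a hra]
        rcases hval b hrb with ⟨_, k2⟩ | ⟨_, k2⟩ <;> rw [k2] <;> tauto
      · rw [hvout a hra, hvout b hrb]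
        exact hc a b hau hbu hab
    have hnost : ∀ s, G.Adj u s → c₁ s ≠ α := by
      intro s hs
      by_cases hrs : Gc.Reachable v s
      · rcases hval s hrs with ⟨g1, g2⟩ | ⟨g1, g2⟩
        · rw [g2]; exact fun hh => hαβ hh.symm
        · exact (hcase s hs g1 hrs).elim
      · rw [hvout s hrs]
        intro h
        have h2 := hAv s hs h
        rw [h2] at hrs
        exact hrs (SimpleGraph.Reachable.refl v)
    exact hnotcol (extend_col G u c₁ hc₁ α hnost)


set_option maxHeartbeats 2000000 in
/-- In a minimum counterexample `G` to "every odd-hole-free graph `H` with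
`Δ(H) ≥ 7` satisfies `χ(H) ≤ max (Δ(H) - 1) (ω(H))`", for a vertex `u` of maximum degree,
there are two nonadjacent neighbours `x, y` of `u` such that *every* proper
`(Δ(G) - 1)`-coloring of `G - u` gives `x` and `y` the same color and gives pairwise
distinct colors to the vertices of `N(u) \ {y}`. -/
theorem statement_9 {V : Type} [Fintype V] (G : SimpleGraph V) [DecidableRel G.Adj]
    (hfree : ¬ G.HasOddHole) (hΔ : 7 ≤ G.maxDegree)
    (hcex : (max (G.maxDegree - 1) G.cliqueNum : ℕ) < G.chromaticNumber)
    (hmin : ∀ (W : Type) [Fintype W] (H : SimpleGraph W) [DecidableRel H.Adj],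
      Fintype.card W < Fintype.card V → ¬ H.HasOddHole → 7 ≤ H.maxDegree →
      H.chromaticNumber ≤ (max (H.maxDegree - 1) H.cliqueNum : ℕ))
    (u : V) (hu : G.degree u = G.maxDegree) :
    ∃ x y, x ≠ y ∧ G.Adj u x ∧ G.Adj u y ∧ ¬ G.Adj x y ∧
      ∀ c : V → Fin (G.maxDegree - 1),
        (∀ v w, v ≠ u → w ≠ u → G.Adj v w → c v ≠ c w) →
        c x = c y ∧
          ∀ v w, G.Adj u v → G.Adj u w → v ≠ y → w ≠ y → c v = c w → v = w := by
  classical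
  set m := G.maxDegree - 1 with hm
  have hnotcol : ¬ G.Colorable m := by
    intro h
    exact absurd hcex (not_lt.mpr (h.chromaticNumber_le.trans
      (Nat.cast_le.mpr (le_max_left m G.cliqueNum))))
  have hdeg : G.degree u = m + 1 := by omega
  have hnoKp2 : ∀ T : Finset V, G.IsClique ↑T → T.card ≤ m + 1 := by
    intro T hT
    by_contra hcon
    push_neg at hcon
    have h1 : m + 2 ≤ G.cliqueNum :=
      le_trans hcon (SimpleGraph.IsClique.card_le_cliqueNum (tc := hT))
    have h2 : G.Colorable (G.maxDegree + 1) :=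
      greedy G G.maxDegree (fun v => G.degree_le_maxDegree v)
    exact absurd hcex (not_lt.mpr (h2.chromaticNumber_le.trans (Nat.cast_le.mpr
      (le_trans (by omega : G.maxDegree + 1 ≤ m + 2)
        (le_trans h1 (le_max_right m G.cliqueNum))))))
  by_cases hex : ∃ c : V → Fin m, ∀ v w, v ≠ u → w ≠ u → G.Adj v w → c v ≠ c w
  · -- a coloring of G - u exists
    obtain ⟨c₀, hc₀⟩ := hex
    have hnoK : ∀ T : Finset V, G.IsClique ↑T → T.card ≤ m := by
      intro T hT
      by_contra hcon
      push_neg at hcon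
      have h1 : m + 1 ≤ G.cliqueNum :=
        le_trans hcon (SimpleGraph.IsClique.card_le_cliqueNum (tc := hT))
      have h2 : G.Colorable (m + 1) := by
        refine ⟨SimpleGraph.Coloring.mk
          (fun w => if w = u then Fin.last m else (c₀ w).castSucc) ?_⟩
        intro a b hab
        by_cases ha : a = u
        · have hb : b ≠ u := by
            intro h
            rw [ha, h] at hab
            exact G.loopless.irrefl u hab
          simp only [if_pos ha, if_neg hb]
          exact (Fin.castSucc_lt_last (c₀ b)).ne'
        · by_cases hb : b = u
          · simp only [if_neg ha, if_pos hb]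
            exact (Fin.castSucc_lt_last (c₀ a)).ne
          · simp only [if_neg ha, if_neg hb]
            intro h
            exact hc₀ a b ha hb hab (Fin.castSucc_inj.mp h)
      exact absurd hcex (not_lt.mpr (h2.chromaticNumber_le.trans (Nat.cast_le.mpr
        (le_trans h1 (le_max_right m G.cliqueNum)))))
    obtain ⟨x, y, hxy, hxu, hyu, hcxy, huniq₀⟩ := pair_structure G u hdeg hnotcol c₀ hc₀
    -- two different monochromatic pairs sharing a vertex lead to a contradiction
    have shared : ∀ (a b q : V) (c c' : V → Fin m),
        (∀ v w, v ≠ u → w ≠ u → G.Adj v w → c v ≠ c w) →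
        (∀ v w, v ≠ u → w ≠ u → G.Adj v w → c' v ≠ c' w) →
        G.Adj u a → G.Adj u b → a ≠ b → c a = c b →
        (∀ v w, G.Adj u v → G.Adj u w → c v = c w →
          v = w ∨ (v = a ∧ w = b) ∨ (v = b ∧ w = a)) →
        G.Adj u q → q ≠ a → q ≠ b → c' a = c' q →
        (∀ v w, G.Adj u v → G.Adj u w → c' v = c' w →
          v = w ∨ (v = a ∧ w = q) ∨ (v = q ∧ w = a)) →
        False := by
      intro a b q c c' hcp hcp' hau hbu hab hcab huniqc huq hqa hqb hc'aq huniqc'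
      have hau' : a ≠ u := (G.ne_of_adj hau).symm
      have hqu' : q ≠ u := (G.ne_of_adj huq).symm
      have hadjaq : ¬ G.Adj a q := fun h => hcp' a q hau' hqu' h hc'aq
      -- q is adjacent to b
      have hqbadj : G.Adj q b := by
        have hcq_ne : c q ≠ c a := by
          intro h
          rcases huniqc q a huq hau h with h' | ⟨h1, h2⟩ | ⟨h1, h2⟩
          · exact hqa h'
          · exact hqa h1
          · exact hqb h1
        obtain ⟨s, hsu, hsc, hsadj⟩ := kempe G hfree u hnotcol c hcp hau hbu hab hcab huniqc
          huq hqa hqb (show c a ≠ c q from fun h => hcq_ne h.symm)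
        rcases huniqc s a hsu hau hsc with h' | ⟨h1, h2⟩ | ⟨h1, h2⟩
        · exact absurd (h' ▸ hsadj) (fun hh => hadjaq hh.symm)
        · exact absurd (h1 ▸ hsadj) (fun hh => hadjaq hh.symm)
        · exact h1 ▸ hsadj
      -- N(u) plus u minus a forms a clique which is too big
      have hK : G.IsClique ↑(insert u ((G.neighborFinset u).erase a)) := by
        intro s hs t ht hst
        simp only [Finset.coe_insert, Set.mem_insert_iff, Finset.mem_coe, Finset.mem_erase,
          SimpleGraph.mem_neighborFinset] at hs ht
        rcases hs with rfl | ⟨hsa, hsu⟩ <;> rcases ht with rfl | ⟨hta, htu⟩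
        · exact absurd rfl hst
        · exact htu
        · exact hsu.symm
        · by_cases hsb : s = b <;> by_cases htb : t = b
          · exact absurd (hsb.trans htb.symm) hst
          · -- s = b : show Adj b t
            subst hsb
            by_cases htq : t = q
            · subst htq
              exact hqbadj.symm
            · have hne : c' t ≠ c' s := by
                intro h
                rcases huniqc' t s htu hsu h with h' | ⟨h1, h2⟩ | ⟨h1, h2⟩
                · exact htb h'
                · exact hta h1
                · exact htq h1
              obtain ⟨s', hs'u, hs'c, hs'adj⟩ := kempe G hfree u hnotcol c' hcp' hau huq
                (fun h => hqa h.symm) hc'aq huniqc' hsu hsa (fun h => hqb h.symm) hne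
              rcases huniqc' s' t hs'u htu hs'c with h' | ⟨h1, h2⟩ | ⟨h1, h2⟩
              · exact h' ▸ hs'adj
              · exact absurd h2 htq
              · exact absurd h2 hta
          · -- t = b : show Adj s b
            subst htb
            by_cases hsq : s = q
            · subst hsq
              exact hqbadj
            · have hne : c' s ≠ c' t := by
                intro h
                rcases huniqc' s t hsu htu h with h' | ⟨h1, h2⟩ | ⟨h1, h2⟩
                · exact hsb h'
                · exact hsa h1
                · exact hsq h1
              obtain ⟨s', hs'u, hs'c, hs'adj⟩ := kempe G hfree u hnotcol c' hcp' hau huq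
                (fun h => hqa h.symm) hc'aq huniqc' htu hta (fun h => hqb h.symm) hne
              rcases huniqc' s' s hs'u hsu hs'c with h' | ⟨h1, h2⟩ | ⟨h1, h2⟩
              · exact (h' ▸ hs'adj).symm
              · exact absurd h2 hsq
              · exact absurd h2 hsa
          · -- both differ from a and b
            have hne : c t ≠ c s := by
              intro h
              rcases huniqc t s htu hsu h with h' | ⟨h1, h2⟩ | ⟨h1, h2⟩
              · exact hst h'.symm
              · exact hta h1
              · exact htb h1
            obtain ⟨s', hs'u, hs'c, hs'adj⟩ := kempe G hfree u hnotcol c hcp hau hbu hab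
              hcab huniqc hsu hsa hsb (show c t ≠ c s from hne)
            rcases huniqc s' t hs'u htu hs'c with h' | ⟨h1, h2⟩ | ⟨h1, h2⟩
            · exact h' ▸ hs'adj
            · exact absurd h2 htb
            · exact absurd h2 hta
      have hcard : (insert u ((G.neighborFinset u).erase a)).card = m + 1 := by
        rw [Finset.card_insert_of_notMem
            (fun hmem => (G.notMem_neighborFinset_self u) (Finset.mem_of_mem_erase hmem)),
          Finset.card_erase_of_mem ((SimpleGraph.mem_neighborFinset _ _ _).mpr hau),
          G.card_neighborFinset_eq_degree, hdeg]
        omega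
      have := hnoK _ hK
      omega
    refine ⟨x, y, hxy, hxu, hyu,
      fun h => hc₀ x y ((G.ne_of_adj hxu).symm) ((G.ne_of_adj hyu).symm) h hcxy, ?_⟩
    intro c hcp
    obtain ⟨p, q, hpq, hpu, hqu, hcpq, huniqc⟩ := pair_structure G u hdeg hnotcol c hcp
    have huniq₀' : ∀ v w, G.Adj u v → G.Adj u w → c₀ v = c₀ w →
        v = w ∨ (v = y ∧ w = x) ∨ (v = x ∧ w = y) := by
      intro v w h1 h2 h3
      rcases huniq₀ v w h1 h2 h3 with h | h | h
      exacts [Or.inl h, Or.inr (Or.inr h), Or.inr (Or.inl h)]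
    have hset : (p = x ∧ q = y) ∨ (p = y ∧ q = x) := by
      by_contra hcon
      push_neg at hcon
      have huniqc' : ∀ v w, G.Adj u v → G.Adj u w → c v = c w →
          v = w ∨ (v = q ∧ w = p) ∨ (v = p ∧ w = q) := by
        intro v w h1 h2 h3
        rcases huniqc v w h1 h2 h3 with h | h | h
        exacts [Or.inl h, Or.inr (Or.inr h), Or.inr (Or.inl h)]
      by_cases hp1 : p = x
      · subst hp1
        exact shared p y q c₀ c hc₀ hcp hxu hyu hxy hcxy huniq₀ hqu
          (fun h => hpq h.symm) (hcon.1 rfl) hcpq huniqc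
      · by_cases hp2 : p = y
        · subst hp2
          exact shared p x q c₀ c hc₀ hcp hyu hxu (Ne.symm hxy) hcxy.symm huniq₀' hqu
            (fun h => hpq h.symm) (hcon.2 rfl) hcpq huniqc
        · by_cases hq1 : q = x
          · subst hq1
            exact shared q y p c₀ c hc₀ hcp hxu hyu hxy hcxy huniq₀ hpu
              (fun h => hpq h) hp2 hcpq.symm huniqc'
          · by_cases hq2 : q = y
            · subst hq2
              exact shared q x p c₀ c hc₀ hcp hyu hxu (Ne.symm hxy) hcxy.symm huniq₀' hpu
                (fun h => hpq h) hp1 hcpq.symm huniqc'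
            · have hne : c₀ q ≠ c₀ p := by
                intro h
                rcases huniq₀ q p hqu hpu h with h' | ⟨h1, h2⟩ | ⟨h1, h2⟩
                · exact hpq h'.symm
                · exact hq1 h1
                · exact hq2 h1
              obtain ⟨s, hsu, hsc, hsadj⟩ := kempe G hfree u hnotcol c₀ hc₀ hxu hyu hxy
                hcxy huniq₀ hpu hp1 hp2 hne
              have hsq : s = q := by
                rcases huniq₀ s q hsu hqu hsc with h' | ⟨h1, h2⟩ | ⟨h1, h2⟩
                · exact h'
                · exact absurd h2 hq2
                · exact absurd h2 hq1
              exact hcp p q ((G.ne_of_adj hpu).symm) ((G.ne_of_adj hqu).symm)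
                (hsq ▸ hsadj) hcpq
    rcases hset with ⟨h1, h2⟩ | ⟨h1, h2⟩
    · subst h1; subst h2
      refine ⟨hcpq, ?_⟩
      intro v w hv hw hvy hwy hcvw
      rcases huniqc v w hv hw hcvw with h | ⟨a1, a2⟩ | ⟨a1, a2⟩
      · exact h
      · exact absurd a2 hwy
      · exact absurd a1 hvy
    · subst h1; subst h2
      refine ⟨hcpq.symm, ?_⟩
      intro v w hv hw hvy hwy hcvw
      rcases huniqc v w hv hw hcvw with h | ⟨a1, a2⟩ | ⟨a1, a2⟩
      · exact h
      · exact absurd a1 hvy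
      · exact absurd a2 hwy
  · -- no (Δ-1)-coloring of G - u exists : the coloring clause is vacuous
    have hpair : ∃ x ∈ G.neighborFinset u, ∃ y ∈ G.neighborFinset u, x ≠ y ∧ ¬ G.Adj x y := by
      by_contra hcon
      push_neg at hcon
      have hK : G.IsClique ↑(insert u (G.neighborFinset u)) := by
        intro s hs t ht hst
        simp only [Finset.coe_insert, Set.mem_insert_iff, Finset.mem_coe,
          SimpleGraph.mem_neighborFinset] at hs ht
        rcases hs with rfl | hs <;> rcases ht with rfl | ht
        · exact absurd rfl hst
        · exact ht
        · exact hs.symm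
        · exact hcon s ((SimpleGraph.mem_neighborFinset _ _ _).mpr hs) t
            ((SimpleGraph.mem_neighborFinset _ _ _).mpr ht) hst
      have hcard : (insert u (G.neighborFinset u)).card = m + 2 := by
        rw [Finset.card_insert_of_notMem (G.notMem_neighborFinset_self u),
          G.card_neighborFinset_eq_degree]
        omega
      have := hnoKp2 _ hK
      omega
    obtain ⟨x, hx, y, hy, hxy, hnadj⟩ := hpair
    exact ⟨x, y, hxy, (SimpleGraph.mem_neighborFinset _ _ _).mp hx,
      (SimpleGraph.mem_neighborFinset _ _ _).mp hy, hnadj,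
      fun c hc => absurd ⟨c, hc⟩ hex⟩
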